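/- Let m be the minimum value of Γ(t+1) over t ≥ 0 (m ≈ 0.8856). For every real x ≥ 1, (1/x)·( e^x − 1 ) ≤ ν(x) ≤ x·( e^x + (1−m)/m ), where ν(x) = ∫_0^∞ x^t / Γ(t+1) dt (in particular this improper integral is finite). -/

import Mathlib

open MeasureTheory Set Filter

theorem nu_bounds (m : ℝ)
    (hm : IsLeast ((fun t : ℝ => Real.Gamma (t + 1)) '' Set.Ici (0 : ℝ)) m)
    (x : ℝ) (hx : 1 ≤ x) :
    IntegrableOn (fun t : ℝ => x ^ t / Real.Gamma (t + 1)) (Set.Ioi 0) ∧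
    (1 / x) * (Real.exp x - 1) ≤ ∫ t in Set.Ioi (0 : ℝ), x ^ t / Real.Gamma (t + 1) ∧
    (∫ t in Set.Ioi (0 : ℝ), x ^ t / Real.Gamma (t + 1)) ≤
      x * (Real.exp x + (1 - m) / m) := by
  set f : ℝ → ℝ := fun t => x ^ t / Real.Gamma (t + 1) with hf
  have hx0 : (0:ℝ) < x := lt_of_lt_of_le one_pos hx
  -- facts about m
  obtain ⟨t₀, ht₀, hmt₀⟩ := hm.1
  have hm0 : 0 < m := by
    rw [← hmt₀]; exact Real.Gamma_pos_of_pos (by simp at ht₀; linarith)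
  have hmle : ∀ t : ℝ, 0 ≤ t → m ≤ Real.Gamma (t + 1) := fun t ht => hm.2 ⟨t, ht, rfl⟩
  -- positivity of Gamma on relevant range
  have hGpos : ∀ t : ℝ, 0 ≤ t → 0 < Real.Gamma (t + 1) := fun t ht =>
    Real.Gamma_pos_of_pos (by linarith)
  have hfnonneg : ∀ t : ℝ, 0 ≤ t → 0 ≤ f t := fun t ht =>
    div_nonneg (Real.rpow_nonneg hx0.le t) (hGpos t ht).le
  -- continuity
  have hcont : ∀ t : ℝ, 0 ≤ t → ContinuousAt f t := by
    intro t ht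
    have h1 : ContinuousAt (fun s : ℝ => x ^ s) t :=
      Real.continuousAt_const_rpow hx0.ne'
    have h2 : ContinuousAt (fun s : ℝ => Real.Gamma (s + 1)) t := by
      have hd : DifferentiableAt ℝ Real.Gamma (t + 1) := by
        refine Real.differentiableAt_Gamma fun k => ?_
        have : (0:ℝ) ≤ (k:ℝ) := Nat.cast_nonneg k
        intro h; nlinarith
      exact ContinuousAt.comp (g := Real.Gamma) (f := fun s : ℝ => s + 1) (x := t)
        hd.continuousAt ((continuous_add_right (1:ℝ)).continuousAt)
    exact h1.div h2 (hGpos t ht).ne'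
  have hIntIoc : ∀ a b : ℝ, 0 ≤ a → IntegrableOn f (Ioc a b) := by
    intro a b ha
    refine (ContinuousOn.integrableOn_Icc ?_).mono_set Ioc_subset_Icc_self
    exact fun t htI => (hcont t (le_trans ha htI.1)).continuousWithinAt
  have hII : ∀ a b : ℝ, 0 ≤ a → a ≤ b → IntervalIntegrable f volume a b := by
    intro a b ha hab
    rw [intervalIntegrable_iff, uIoc_of_le hab]
    exact hIntIoc a b ha
  -- Gamma bounds on [n, n+1]
  have hGup : ∀ (n : ℕ) (t : ℝ), t ∈ Icc (n:ℝ) ((n:ℝ)+1) →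
      Real.Gamma (t + 1) ≤ (Nat.factorial (n+1) : ℝ) := by
    intro n t ht
    have hseg : t + 1 ∈ segment ℝ ((n:ℝ)+1) ((n:ℝ)+2) := by
      rw [segment_eq_Icc (by linarith)]
      exact ⟨by linarith [ht.1], by linarith [ht.2]⟩
    have h := Real.convexOn_Gamma.le_on_segment (x := (n:ℝ)+1) (y := (n:ℝ)+2)
      (by simp; positivity) (by simp; positivity) hseg
    have e1 : Real.Gamma ((n:ℝ)+1) = (Nat.factorial n : ℝ) := Real.Gamma_nat_eq_factorial n
    have e2 : Real.Gamma ((n:ℝ)+2) = (Nat.factorial (n+1) : ℝ) := by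
      have := Real.Gamma_nat_eq_factorial (n+1)
      push_cast at this ⊢; convert this using 2; ring
    rw [e1, e2] at h
    refine h.trans (max_le ?_ le_rfl)
    exact_mod_cast Nat.factorial_le (Nat.le_succ n)
  have hGlo : ∀ (n : ℕ), 1 ≤ n → ∀ t ∈ Icc (n:ℝ) ((n:ℝ)+1),
      (Nat.factorial n : ℝ) ≤ Real.Gamma (t + 1) := by
    intro n hn t ht
    have h2 : (2:ℝ) ≤ (n:ℝ) + 1 := by
      have : (1:ℝ) ≤ (n:ℝ) := by exact_mod_cast hn
      linarith
    have hle : (n:ℝ) + 1 ≤ t + 1 := by linarith [ht.1]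
    have := Real.Gamma_strictMonoOn_Ici.monotoneOn (mem_Ici.2 h2)
      (mem_Ici.2 (le_trans h2 hle)) hle
    rwa [Real.Gamma_nat_eq_factorial] at this
  -- rpow bounds
  have hxlo : ∀ (n : ℕ) (t : ℝ), (n:ℝ) ≤ t → (x ^ n : ℝ) ≤ x ^ t := by
    intro n t hnt
    rw [← Real.rpow_natCast x n]
    exact Real.rpow_le_rpow_of_exponent_le hx hnt
  have hxup : ∀ (n : ℕ) (t : ℝ), t ≤ (n:ℝ) + 1 → x ^ t ≤ (x ^ (n+1) : ℝ) := by
    intro n t hnt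
    rw [← Real.rpow_natCast x (n+1)]
    refine Real.rpow_le_rpow_of_exponent_le hx ?_
    push_cast; linarith
  -- the upper bound sequence
  set c : ℕ → ℝ := fun n => if n = 0 then x / m else x ^ (n+1) / (Nat.factorial n : ℝ) with hc
  have hcnonneg : ∀ n, 0 ≤ c n := by
    intro n
    by_cases h : n = 0
    · simp only [hc, h, if_pos]
      exact div_nonneg hx0.le hm0.le
    · simp only [hc, if_neg h]
      exact div_nonneg (pow_nonneg hx0.le _) (Nat.cast_nonneg _)
  -- per-interval bounds
  have hIlow : ∀ n : ℕ, (x ^ n / (Nat.factorial (n+1) : ℝ)) ≤ ∫ t in (n:ℝ)..((n:ℝ)+1), f t := by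
    intro n
    have h := intervalIntegral.integral_mono_on (by linarith : (n:ℝ) ≤ (n:ℝ)+1)
      (intervalIntegrable_const (c := x ^ n / (Nat.factorial (n+1) : ℝ)))
      (hII (n:ℝ) ((n:ℝ)+1) (Nat.cast_nonneg n) (by linarith)) ?_
    · simpa using h
    · intro t ht
      have hΓ := hGup n t ht
      have hΓ0 := hGpos t (le_trans (Nat.cast_nonneg n) ht.1)
      exact div_le_div₀ (Real.rpow_nonneg hx0.le t) (hxlo n t ht.1) hΓ0 hΓ
  have hIup : ∀ n : ℕ, (∫ t in (n:ℝ)..((n:ℝ)+1), f t) ≤ c n := by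
    intro n
    have h := intervalIntegral.integral_mono_on (by linarith : (n:ℝ) ≤ (n:ℝ)+1)
      (hII (n:ℝ) ((n:ℝ)+1) (Nat.cast_nonneg n) (by linarith))
      (intervalIntegrable_const (c := c n)) ?_
    · simpa using h
    · intro t ht
      have hΓ0 := hGpos t (le_trans (Nat.cast_nonneg n) ht.1)
      rcases Nat.eq_zero_or_pos n with h0 | h1
      · subst h0
        simp only [hc, if_pos rfl]
        have hxt : x ^ t ≤ x ^ (1:ℕ) := hxup 0 t (by simpa using ht.2)
        simp only [pow_one] at hxt
        have hmΓ := hmle t (by simpa using ht.1)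
        exact div_le_div₀ hx0.le hxt hm0 hmΓ
      · have hn0 : n ≠ 0 := Nat.one_le_iff_ne_zero.mp h1
        simp only [hc, if_neg hn0]
        have hΓ := hGlo n h1 t ht
        refine div_le_div₀ (by positivity) (hxup n t ht.2) (by positivity) hΓ
  -- partial sums of the integral
  have hsum : ∀ N : ℕ, (∫ t in (0:ℝ)..(N:ℝ), f t) =
      ∑ n ∈ Finset.range N, ∫ t in (n:ℝ)..((n:ℝ)+1), f t := by
    intro N
    have h := intervalIntegral.sum_integral_adjacent_intervals
      (a := fun k : ℕ => (k:ℝ)) (n := N) (f := f) (μ := volume) ?_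
    · push_cast at h
      rw [← h]
    · intro k _
      show IntervalIntegrable f volume ((k:ℕ):ℝ) ((k+1 : ℕ) : ℝ)
      rw [show ((k+1 : ℕ) : ℝ) = (k:ℝ) + 1 by push_cast; ring]
      exact hII _ _ (Nat.cast_nonneg k) (by linarith)
  -- HasSum facts
  have h_exp : HasSum (fun n : ℕ => x ^ n / (Nat.factorial n : ℝ)) (Real.exp x) := by
    rw [Real.exp_eq_exp_ℝ]
    exact NormedSpace.expSeries_div_hasSum_exp x
  have h1 : HasSum (fun n : ℕ => x ^ (n+1) / (Nat.factorial (n+1) : ℝ)) (Real.exp x - 1) := by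
    refine (hasSum_nat_add_iff (f := fun n : ℕ => x ^ n / (Nat.factorial n : ℝ)) 1).2 ?_
    simpa using h_exp
  have h2 : HasSum (fun n : ℕ => x ^ n / (Nat.factorial (n+1) : ℝ)) ((1/x) * (Real.exp x - 1)) := by
    have h := h1.mul_left (1/x)
    have e : (fun n : ℕ => x ^ n / (Nat.factorial (n+1) : ℝ)) =
        fun n : ℕ => (1/x) * (x ^ (n+1) / (Nat.factorial (n+1) : ℝ)) := by
      funext n
      rw [pow_succ]
      field_simp
    rw [e]
    exact h
  have h3 : HasSum c (x / m + x * (Real.exp x - 1)) := by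
    have hshift : HasSum (fun n : ℕ => c (n+1)) (x * (Real.exp x - 1)) := by
      have h := h1.mul_left x
      have e : (fun n : ℕ => c (n+1)) =
          fun n : ℕ => x * (x ^ (n+1) / (Nat.factorial (n+1) : ℝ)) := by
        funext n
        simp only [hc, if_neg (Nat.succ_ne_zero n)]
        rw [pow_succ]
        field_simp
      rw [e]
      exact h
    have := (hasSum_nat_add_iff (f := c) 1).1 hshift
    simpa [hc, add_comm] using this
  -- bound on partial integrals
  have hSle : ∀ N : ℕ, (∫ t in (0:ℝ)..(N:ℝ), f t) ≤ x / m + x * (Real.exp x - 1) := by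
    intro N
    rw [hsum N]
    refine le_trans (Finset.sum_le_sum fun n _ => hIup n) ?_
    exact sum_le_hasSum _ (fun n _ => hcnonneg n) h3
  -- integrability
  have hnorm : ∀ N : ℕ, (∫ t in (0:ℝ)..(N:ℝ), ‖f t‖) ≤ x / m + x * (Real.exp x - 1) := by
    intro N
    have heq : (∫ t in (0:ℝ)..(N:ℝ), ‖f t‖) = ∫ t in (0:ℝ)..(N:ℝ), f t := by
      refine intervalIntegral.integral_congr fun t ht => ?_
      rw [uIcc_of_le (by exact_mod_cast Nat.cast_nonneg N : (0:ℝ) ≤ (N:ℝ))] at ht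
      exact Real.norm_of_nonneg (hfnonneg t ht.1)
    rw [heq]; exact hSle N
  have hint : IntegrableOn f (Ioi (0:ℝ)) := by
    refine integrableOn_Ioi_of_intervalIntegral_norm_bounded
      (x / m + x * (Real.exp x - 1)) 0 (b := fun N : ℕ => (N:ℝ)) (l := atTop)
      (fun i => hIntIoc 0 _ le_rfl) tendsto_natCast_atTop_atTop
      (Filter.Eventually.of_forall hnorm)
  refine ⟨hint, ?_, ?_⟩
  · -- lower bound
    have hS : Tendsto (fun N : ℕ => ∫ t in (0:ℝ)..(N:ℝ), f t) atTop
        (nhds (∫ t in Ioi (0:ℝ), f t)) :=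
      intervalIntegral_tendsto_integral_Ioi 0 hint tendsto_natCast_atTop_atTop
    refine le_of_tendsto_of_tendsto' h2.tendsto_sum_nat hS fun N => ?_
    rw [hsum N]
    exact Finset.sum_le_sum fun n _ => hIlow n
  · -- upper bound
    have hS : Tendsto (fun N : ℕ => ∫ t in (0:ℝ)..(N:ℝ), f t) atTop
        (nhds (∫ t in Ioi (0:ℝ), f t)) :=
      intervalIntegral_tendsto_integral_Ioi 0 hint tendsto_natCast_atTop_atTop
    have := le_of_tendsto hS (Filter.Eventually.of_forall hSle)
    refine this.trans (le_of_eq ?_)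
    field_simp
    ring
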